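/- Let n ≥ 2 be even, V > 0, C > 0, λ > 0, and a₀, …, a_{n/2−1} real numbers. Let K : (0, ∞) → ℝ be continuous with |K(t) − (4πt)^{−n/2} Σ_{k=0}^{n/2−1} a_k t^k| ≤ C for all t ∈ (0, 1] and |K(t) − 1/V| ≤ C e^{−λt} for all t ≥ 1. Set D(t) = K(t) − 1/V − (4π)^{−n/2} Σ_{k=0}^{n/2−1} a_k t^{k−n/2}, and for real s > 0 with s ∉ {n/2 − k : 0 ≤ k ≤ n/2 − 1} define ζ(s) = (1/Γ(s)) [ Σ_{k=0}^{n/2−1} a_k / ((4π)^{n/2}(s − n/2 + k)) + ∫₁^∞ (K(t) − 1/V) t^{s−1} dt + ∫₀^1 D(t) t^{s−1} dt ]. Then lim_{s→1⁺} [ ζ(s) − a_{n/2−1}/((4π)^{n/2} Γ(s) (s−1)) ] exists and equals Σ_{k=0}^{n/2−2} a_k / ((4π)^{n/2}(1 − n/2 + k)) + ∫₁^∞ (K(t) − 1/V) dt + ∫₀^1 D(t) dt. -/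

import Mathlib

open Real MeasureTheory Filter

/-- The analytically continued diagonal Minakshisundaram–Pleijel zeta function
(of the diagonal heat kernel of a compact Riemannian manifold of even
dimension `n` and volume `V`) has a simple pole at `s = 1`:
`lim_{s→1⁺} [ζ(s) − a_{n/2−1}/((4π)^{n/2} Γ(s)(s−1))]` exists and equals
the displayed finite part. -/
theorem heat_zeta_regularized_value_at_one
    (n : ℕ) (hn : 2 ≤ n) (hne : Even n)
    (V C lam : ℝ) (hV : 0 < V) (hC : 0 < C) (hlam : 0 < lam)
    (a : ℕ → ℝ)
    (K : ℝ → ℝ) (hK : ContinuousOn K (Set.Ioi 0))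
    (h1 : ∀ t ∈ Set.Ioc (0:ℝ) 1,
      |K t - (4 * π * t) ^ (-(n:ℝ) / 2) * ∑ k ∈ Finset.range (n / 2), a k * t ^ k| ≤ C)
    (h2 : ∀ t : ℝ, 1 ≤ t → |K t - 1 / V| ≤ C * Real.exp (-lam * t))
    (D : ℝ → ℝ)
    (hD : ∀ t, D t = K t - 1 / V
      - (4 * π) ^ (-(n:ℝ) / 2) * ∑ k ∈ Finset.range (n / 2), a k * t ^ ((k:ℝ) - n / 2))
    (zeta : ℝ → ℝ)
    (hzeta : ∀ s : ℝ, 0 < s → (∀ k ∈ Finset.range (n / 2), s ≠ (n:ℝ) / 2 - k) →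
      zeta s = (1 / Real.Gamma s) *
        ((∑ k ∈ Finset.range (n / 2),
            a k / ((4 * π) ^ ((n:ℝ) / 2) * (s - (n:ℝ) / 2 + k)))
          + (∫ t in Set.Ioi (1:ℝ), (K t - 1 / V) * t ^ (s - 1))
          + ∫ t in Set.Ioc (0:ℝ) 1, D t * t ^ (s - 1))) :
    Tendsto (fun s : ℝ =>
        zeta s - a (n / 2 - 1) / ((4 * π) ^ ((n:ℝ) / 2) * Real.Gamma s * (s - 1)))
      (nhdsWithin 1 (Set.Ioi 1))
      (nhds ((∑ k ∈ Finset.range (n / 2 - 1),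
          a k / ((4 * π) ^ ((n:ℝ) / 2) * (1 - (n:ℝ) / 2 + k)))
        + (∫ t in Set.Ioi (1:ℝ), (K t - 1 / V))
        + ∫ t in Set.Ioc (0:ℝ) 1, D t)) := by
  have hπ : (0:ℝ) < 4 * π := by positivity
  set c : ℝ := (4 * π) ^ ((n:ℝ) / 2) with hc
  have hcpos : 0 < c := Real.rpow_pos_of_pos hπ _
  set m := n / 2 with hm
  have hm1 : 1 ≤ m := by omega
  have hnm : (n:ℝ) / 2 = (m:ℝ) := by
    obtain ⟨j, hj⟩ := hne
    have hj2 : n = 2 * j := by omega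
    have : m = j := by omega
    rw [this, hj2]
    push_cast; ring
  have hmem : Set.Ioo (1:ℝ) 2 ∈ nhdsWithin (1:ℝ) (Set.Ioi 1) :=
    Ioo_mem_nhdsGT_of_mem ⟨le_refl 1, one_lt_two⟩
  -- Γ piece
  have hΓcont : ContinuousAt Real.Gamma 1 := by
    refine (Real.differentiableAt_Gamma fun k => ?_).continuousAt
    intro h
    have : (0:ℝ) ≤ (k:ℝ) := Nat.cast_nonneg k
    linarith [h]
  have hΓ : Tendsto (fun s : ℝ => 1 / Real.Gamma s) (nhdsWithin 1 (Set.Ioi 1)) (nhds 1) := by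
    have hca : ContinuousAt (fun s : ℝ => 1 / Real.Gamma s) 1 :=
      continuousAt_const.div hΓcont (by rw [Real.Gamma_one]; norm_num)
    have := hca.tendsto.mono_left (nhdsWithin_le_nhds (s := Set.Ioi 1))
    simpa [Real.Gamma_one] using this
  -- finite sum piece
  have hS : Tendsto (fun s : ℝ => ∑ k ∈ Finset.range (m - 1),
      a k / (c * (s - (n:ℝ)/2 + k))) (nhdsWithin 1 (Set.Ioi 1))
      (nhds (∑ k ∈ Finset.range (m - 1), a k / (c * (1 - (n:ℝ)/2 + k)))) := by
    refine tendsto_finset_sum _ (fun k hk => ?_)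
    have hkm : k < m - 1 := Finset.mem_range.mp hk
    have hne0 : c * (1 - (n:ℝ)/2 + k) ≠ 0 := by
      refine mul_ne_zero hcpos.ne' ?_
      rw [hnm]
      have : (k:ℝ) + 2 ≤ (m:ℝ) := by exact_mod_cast show k + 2 ≤ m by omega
      intro h; linarith
    have hca : ContinuousAt (fun s : ℝ => a k / (c * (s - (n:ℝ)/2 + k))) 1 :=
      continuousAt_const.div (by fun_prop) hne0
    exact hca.tendsto.mono_left (nhdsWithin_le_nhds (s := Set.Ioi 1))
  -- pointwise limit of t ^ (s-1)
  have hrpow_lim : ∀ t : ℝ, 0 < t →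
      Tendsto (fun s : ℝ => t ^ (s - 1)) (nhdsWithin 1 (Set.Ioi 1)) (nhds 1) := by
    intro t ht0
    have heq : (fun s : ℝ => t ^ (s - 1)) = fun s => Real.exp ((s - 1) * Real.log t) := by
      funext s; rw [Real.rpow_def_of_pos ht0]; ring_nf
    rw [heq]
    have hca : ContinuousAt (fun s : ℝ => Real.exp ((s - 1) * Real.log t)) 1 := by fun_prop
    have := hca.tendsto.mono_left (nhdsWithin_le_nhds (s := Set.Ioi 1))
    simpa using this
  -- big integral piece
  have hI1 : Tendsto (fun s : ℝ => ∫ t in Set.Ioi (1:ℝ), (K t - 1/V) * t ^ (s - 1))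
      (nhdsWithin 1 (Set.Ioi 1)) (nhds (∫ t in Set.Ioi (1:ℝ), (K t - 1/V))) := by
    refine tendsto_integral_filter_of_dominated_convergence
      (fun t => (2 * C / lam) * Real.exp (-(lam/2) * t)) ?_ ?_ ?_ ?_
    · filter_upwards [hmem] with s _
      refine ContinuousOn.aestronglyMeasurable ?_ measurableSet_Ioi
      refine (ContinuousOn.sub (hK.mono (Set.Ioi_subset_Ioi zero_le_one)) continuousOn_const).mul ?_
      refine ContinuousOn.rpow_const continuousOn_id (fun t ht => Or.inl ?_)
      exact ne_of_gt (lt_trans one_pos ht)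
    · filter_upwards [hmem] with s hs
      rw [ae_restrict_iff' measurableSet_Ioi]
      refine Filter.Eventually.of_forall (fun t ht => ?_)
      have ht1 : (1:ℝ) ≤ t := le_of_lt ht
      have ht0 : (0:ℝ) < t := lt_of_lt_of_le one_pos ht1
      have hpos : 0 ≤ t ^ (s - 1) := Real.rpow_nonneg ht0.le _
      have hb1 : t ^ (s - 1) ≤ t := by
        calc t ^ (s - 1) ≤ t ^ (1:ℝ) :=
              Real.rpow_le_rpow_of_exponent_le ht1 (by linarith [hs.2])
        _ = t := Real.rpow_one t
      have hb2 : t ≤ (2/lam) * Real.exp (lam/2 * t) := by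
        have h := Real.add_one_le_exp (lam/2 * t)
        have h' : lam/2 * t ≤ Real.exp (lam/2 * t) := by linarith
        calc t = (2/lam) * (lam/2 * t) := by field_simp
        _ ≤ (2/lam) * Real.exp (lam/2 * t) :=
            mul_le_mul_of_nonneg_left h' (by positivity)
      calc ‖(K t - 1/V) * t ^ (s - 1)‖ = |K t - 1/V| * t ^ (s - 1) := by
            rw [norm_mul, Real.norm_eq_abs, Real.norm_eq_abs, abs_of_nonneg hpos]
      _ ≤ (C * Real.exp (-lam * t)) * t :=
            mul_le_mul (h2 t ht1) hb1 hpos (by positivity)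
      _ ≤ (C * Real.exp (-lam * t)) * ((2/lam) * Real.exp (lam/2 * t)) :=
            mul_le_mul_of_nonneg_left hb2 (by positivity)
      _ = (2 * C / lam) * Real.exp (-(lam/2) * t) := by
            rw [show (-(lam/2) * t) = (-lam * t) + (lam/2 * t) by ring, Real.exp_add]
            ring
    · exact (exp_neg_integrableOn_Ioi 1 (by positivity : (0:ℝ) < lam/2)).const_mul _
    · rw [ae_restrict_iff' measurableSet_Ioi]
      refine Filter.Eventually.of_forall (fun t ht => ?_)
      have ht0 : (0:ℝ) < t := lt_trans one_pos ht
      have := (hrpow_lim t ht0).const_mul (K t - 1/V)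
      simpa using this
  -- small integral piece
  have hI2 : Tendsto (fun s : ℝ => ∫ t in Set.Ioc (0:ℝ) 1, D t * t ^ (s - 1))
      (nhdsWithin 1 (Set.Ioi 1)) (nhds (∫ t in Set.Ioc (0:ℝ) 1, D t)) := by
    have hDcont : ContinuousOn D (Set.Ioc (0:ℝ) 1) := by
      have hcont : ContinuousOn (fun t : ℝ => K t - 1 / V
          - (4 * π) ^ (-(n:ℝ) / 2) * ∑ k ∈ Finset.range m, a k * t ^ ((k:ℝ) - (n:ℝ) / 2))
          (Set.Ioc (0:ℝ) 1) := by
        refine ContinuousOn.sub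
          ((hK.mono Set.Ioc_subset_Ioi_self).sub continuousOn_const) ?_
        refine continuousOn_const.mul ?_
        refine continuousOn_finset_sum _ (fun k _ => ?_)
        refine continuousOn_const.mul ?_
        exact ContinuousOn.rpow_const continuousOn_id (fun t ht => Or.inl (ne_of_gt ht.1))
      exact hcont.congr (fun t _ => hD t)
    have hDbd : ∀ t ∈ Set.Ioc (0:ℝ) 1, |D t| ≤ C + 1/V := by
      intro t ht
      have hid : (4 * π) ^ (-(n:ℝ)/2) * ∑ k ∈ Finset.range m, a k * t ^ ((k:ℝ) - (n:ℝ)/2)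
          = (4 * π * t) ^ (-(n:ℝ)/2) * ∑ k ∈ Finset.range m, a k * t ^ k := by
        rw [Real.mul_rpow hπ.le ht.1.le, mul_assoc]
        congr 1
        rw [Finset.mul_sum]
        refine Finset.sum_congr rfl (fun k _ => ?_)
        rw [← Real.rpow_natCast t k,
          show t ^ (-(n:ℝ)/2) * (a k * t ^ ((k:ℕ):ℝ)) =
            a k * (t ^ (-(n:ℝ)/2) * t ^ ((k:ℕ):ℝ)) from by ring,
          ← Real.rpow_add ht.1]
        congr 1
        push_cast; ring
      have hDt : D t = (K t - (4 * π * t) ^ (-(n:ℝ)/2) *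
          ∑ k ∈ Finset.range m, a k * t ^ k) - 1/V := by
        rw [hD t, ← hid]; ring
      rw [hDt]
      calc |(K t - (4 * π * t) ^ (-(n:ℝ)/2) * ∑ k ∈ Finset.range m, a k * t ^ k) - 1/V|
          ≤ |K t - (4 * π * t) ^ (-(n:ℝ)/2) * ∑ k ∈ Finset.range m, a k * t ^ k| + |1/V| := by
            exact abs_sub _ _
      _ ≤ C + 1/V := by
            have := h1 t ht
            have hV' : |1/V| = 1/V := abs_of_pos (by positivity)
            rw [hV']
            linarith
    refine tendsto_integral_filter_of_dominated_convergence
      (fun _ => C + 1/V) ?_ ?_ ?_ ?_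
    · filter_upwards [hmem] with s _
      refine ContinuousOn.aestronglyMeasurable ?_ measurableSet_Ioc
      refine hDcont.mul ?_
      exact ContinuousOn.rpow_const continuousOn_id (fun t ht => Or.inl (ne_of_gt ht.1))
    · filter_upwards [hmem] with s hs
      rw [ae_restrict_iff' measurableSet_Ioc]
      refine Filter.Eventually.of_forall (fun t ht => ?_)
      have hpos : 0 ≤ t ^ (s - 1) := Real.rpow_nonneg ht.1.le _
      have hle1 : t ^ (s - 1) ≤ 1 :=
        Real.rpow_le_one ht.1.le ht.2 (by linarith [hs.1])
      calc ‖D t * t ^ (s - 1)‖ = |D t| * t ^ (s - 1) := by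
            rw [norm_mul, Real.norm_eq_abs, Real.norm_eq_abs, abs_of_nonneg hpos]
      _ ≤ (C + 1/V) * 1 :=
            mul_le_mul (hDbd t ht) hle1 hpos (by positivity)
      _ = C + 1/V := mul_one _
    · exact (integrableOn_const measure_Ioc_lt_top.ne)
    · rw [ae_restrict_iff' measurableSet_Ioc]
      refine Filter.Eventually.of_forall (fun t ht => ?_)
      have := (hrpow_lim t ht.1).const_mul (D t)
      simpa using this
  -- combine
  have hmain := hΓ.mul ((hS.add hI1).add hI2)
  rw [one_mul] at hmain
  refine hmain.congr' ?_
  filter_upwards [hmem] with s hs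
  have hs1 : (1:ℝ) < s := hs.1
  have hΓs : Real.Gamma s ≠ 0 := (Real.Gamma_pos_of_pos (by linarith)).ne'
  have hsne : ∀ k ∈ Finset.range m, s ≠ (n:ℝ)/2 - k := by
    intro k hk heq
    rw [hnm] at heq
    have h1' := hs.1
    have h2' := hs.2
    rw [heq] at h1' h2'
    have hA : k + 1 < m := by
      exact_mod_cast show ((k:ℝ) + 1 < (m:ℝ)) from by linarith
    have hB : (m:ℝ) < (k:ℝ) + 2 := by linarith
    have hB' : m < k + 2 := by exact_mod_cast hB
    omega
  rw [hzeta s (by linarith) hsne]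
  have hsplit : ∑ k ∈ Finset.range m, a k / (c * (s - (n:ℝ)/2 + k))
      = (∑ k ∈ Finset.range (m - 1), a k / (c * (s - (n:ℝ)/2 + k)))
        + a (m - 1) / (c * (s - 1)) := by
    have hs0 := Finset.sum_range_succ (fun k => a k / (c * (s - (n:ℝ)/2 + k))) (m - 1)
    rw [show m - 1 + 1 = m from by omega] at hs0
    rw [hs0]
    congr 2
    rw [hnm, Nat.cast_sub hm1]
    push_cast; ring
  rw [hsplit]
  generalize (∫ t in Set.Ioi (1:ℝ), (K t - 1/V) * t ^ (s - 1)) = I1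
  generalize (∫ t in Set.Ioc (0:ℝ) 1, D t * t ^ (s - 1)) = I2
  have hsm1 : s - 1 ≠ 0 := by intro h; linarith [hs.1]
  field_simp
  ring
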